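/- Let (e_n) be a normalised unconditional Schauder basis such that every normalised block sequence (x_n) is equivalent to its shift (x_{n+1}). Then whenever (x_i) and (y_i) are normalised block sequences with max(supp x_i ∪ supp y_i) < min(supp x_{i+1} ∪ supp y_{i+1}) for all i, the sequences (x_i) and (y_i) are equivalent. -/

import Mathlib

open Filter Topology

noncomputable section

structure SchauderBasisR (X : Type*) [NormedAddCommGroup X] [NormedSpace ℝ X] where
  e : ℕ → X
  coord : ℕ → X →L[ℝ] ℝ
  biorth : ∀ n m, coord n (e m) = if n = m then 1 else 0
  expansion : ∀ x : X,
    Filter.Tendsto (fun N => ∑ n ∈ Finset.range N, coord n x • e n) Filter.atTop (nhds x)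
  normalised : ∀ n, ‖e n‖ = 1

section Defs

variable {X Y : Type*} [NormedAddCommGroup X] [NormedSpace ℝ X]
  [NormedAddCommGroup Y] [NormedSpace ℝ Y]

/-- Convergence of the series `∑ x n` (of partial sums). -/
def Converges (x : ℕ → X) : Prop :=
  ∃ s, Filter.Tendsto (fun N => ∑ n ∈ Finset.range N, x n) Filter.atTop (nhds s)

/-- Two sequences are equivalent if the same scalar series converge. -/
def SeqEquiv (x : ℕ → X) (y : ℕ → Y) : Prop :=
  ∀ a : ℕ → ℝ, Converges (fun n => a n • x n) ↔ Converges (fun n => a n • y n)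

/-- `C`-equivalence of two sequences. -/
def CEquiv (C : ℝ) (x : ℕ → X) (y : ℕ → Y) : Prop :=
  ∀ (a : ℕ → ℝ) (N : ℕ),
    C⁻¹ * ‖∑ n ∈ Finset.range N, a n • y n‖ ≤ ‖∑ n ∈ Finset.range N, a n • x n‖ ∧
    ‖∑ n ∈ Finset.range N, a n • x n‖ ≤ C * ‖∑ n ∈ Finset.range N, a n • y n‖

/-- A basic sequence: uniformly bounded partial-sum projections. -/
def IsBasicSeq (x : ℕ → X) : Prop :=
  ∃ K, 1 ≤ K ∧ ∀ (a : ℕ → ℝ) (m n : ℕ), m ≤ n →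
    ‖∑ i ∈ Finset.range m, a i • x i‖ ≤ K * ‖∑ i ∈ Finset.range n, a i • x i‖

/-- A sequence of signs. -/
def IsSigns (θ : ℕ → ℝ) : Prop := ∀ n, θ n = 1 ∨ θ n = -1

end Defs

namespace SchauderBasisR

variable {X : Type*} [NormedAddCommGroup X] [NormedSpace ℝ X] (b : SchauderBasisR X)

/-- Support of a vector with respect to the basis. -/
def supp (x : X) : Set ℕ := {n | b.coord n x ≠ 0}

/-- A normalised block sequence of the basis. -/
def IsBlockSeq (x : ℕ → X) : Prop :=
  (∀ n, ‖x n‖ = 1) ∧ (∀ n, (b.supp (x n)).Finite) ∧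
  ∀ n, ∀ i ∈ b.supp (x n), ∀ j ∈ b.supp (x (n+1)), i < j

/-- Unconditionality of the basis. -/
def Unconditional : Prop :=
  ∀ θ : ℕ → ℝ, IsSigns θ → SeqEquiv (fun n => θ n • b.e n) b.e

/-- 1-unconditionality (finite-sum form). -/
def OneUnconditional : Prop :=
  ∀ (θ a : ℕ → ℝ), IsSigns θ → ∀ N,
    ‖∑ n ∈ Finset.range N, (θ n * a n) • b.e n‖ ≤ ‖∑ n ∈ Finset.range N, a n • b.e n‖

/-- The shift property: every normalised block sequence is equivalent to its shift. -/
def ShiftProperty : Prop :=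
  ∀ x : ℕ → X, b.IsBlockSeq x → SeqEquiv x (fun n => x (n+1))

/-- The basis is shrinking. -/
def Shrinking : Prop :=
  ∀ f : X →L[ℝ] ℝ, Filter.Tendsto
    (fun n => sSup ((fun y => |f y|) ''
      {y | y ∈ Submodule.span ℝ (Set.range fun i => b.e (n + i)) ∧ ‖y‖ ≤ 1}))
    Filter.atTop (nhds 0)

/-- The basis is boundedly complete. -/
def BoundedlyComplete : Prop :=
  ∀ a : ℕ → ℝ, (∃ M, ∀ N, ‖∑ i ∈ Finset.range N, a i • b.e i‖ ≤ M) →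
    Converges (fun i => a i • b.e i)

end SchauderBasisR

section AuxConverges

variable {X : Type*} [NormedAddCommGroup X] [NormedSpace ℝ X]

lemma Converges.add' {f g : ℕ → X} (hf : Converges f) (hg : Converges g) :
    Converges (fun n => f n + g n) := by
  obtain ⟨s, hs⟩ := hf; obtain ⟨t, ht⟩ := hg
  exact ⟨s + t, by simpa [Finset.sum_add_distrib] using hs.add ht⟩

lemma Converges.smul' (r : ℝ) {f : ℕ → X} (hf : Converges f) :
    Converges (fun n => r • f n) := by
  obtain ⟨s, hs⟩ := hf
  exact ⟨r • s, by simpa [Finset.smul_sum] using hs.const_smul r⟩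

lemma converges_congr {f g : ℕ → X} (h : ∀ n, f n = g n) : Converges f ↔ Converges g := by
  rw [funext h]

end AuxConverges
namespace SchauderBasisR

variable {X : Type*} [NormedAddCommGroup X] [NormedSpace ℝ X] (b : SchauderBasisR X)

lemma finite_expansion {v : X} (hf : (b.supp v).Finite) :
    v = ∑ k ∈ hf.toFinset, b.coord k v • b.e k := by
  have hconst : ∀ N ≥ hf.toFinset.sup id + 1,
      ∑ k ∈ Finset.range N, b.coord k v • b.e k = ∑ k ∈ hf.toFinset, b.coord k v • b.e k := by
    intro N hN
    refine (Finset.sum_subset ?_ ?_).symm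
    · intro k hk
      have : k ≤ hf.toFinset.sup id := Finset.le_sup (f := id) hk
      exact Finset.mem_range.mpr (by omega)
    · intro k _ hk
      have : b.coord k v = 0 := by
        by_contra h
        exact hk (hf.mem_toFinset.mpr h)
      simp [this]
  exact tendsto_nhds_unique (b.expansion v) (tendsto_atTop_of_eventually_const hconst)

lemma proj_bound [CompleteSpace X] : ∃ K : ℝ, ∀ (v : X) (M : ℕ),
    ‖∑ k ∈ Finset.range M, b.coord k v • b.e k‖ ≤ K * ‖v‖ := by
  set P : ℕ → X →L[ℝ] X := fun M => ∑ k ∈ Finset.range M, (b.coord k).smulRight (b.e k) with hPdef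
  have hP : ∀ M v, P M v = ∑ k ∈ Finset.range M, b.coord k v • b.e k := by
    intro M v
    simp [hPdef, ContinuousLinearMap.sum_apply]
  have hpt : ∀ v : X, ∃ C, ∀ M, ‖P M v‖ ≤ C := by
    intro v
    obtain ⟨C, hC⟩ := (b.expansion v).norm.bddAbove_range
    exact ⟨C, fun M => by rw [hP]; exact hC ⟨M, rfl⟩⟩
  obtain ⟨C', hC'⟩ := banach_steinhaus hpt
  refine ⟨C', fun v M => ?_⟩
  rw [← hP]
  exact ((P M).le_opNorm v).trans (mul_le_mul_of_nonneg_right (hC' M) (norm_nonneg v))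

end SchauderBasisR
namespace SchauderBasisR

variable {X : Type*} [NormedAddCommGroup X] [NormedSpace ℝ X] (b : SchauderBasisR X)

open Classical in
/-- The basis coefficients of the formal series `∑ a n • z n`. -/
def coef (z : ℕ → X) (a : ℕ → ℝ) (k : ℕ) : ℝ :=
  if h : ∃ n, b.coord k (z n) ≠ 0 then a h.choose * b.coord k (z h.choose) else 0

lemma blockEquiv [CompleteSpace X] {z : ℕ → X} (hz : b.IsBlockSeq z) (a : ℕ → ℝ) :
    Converges (fun n => a n • z n) ↔ Converges (fun k => b.coef z a k • b.e k) := by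
  obtain ⟨hnorm, hfin, hord⟩ := hz
  set S : ℕ → Finset ℕ := fun n => (hfin n).toFinset with hSdef
  have mem_S : ∀ k n, k ∈ S n ↔ b.coord k (z n) ≠ 0 := fun k n => (hfin n).mem_toFinset
  have f1 : ∀ n, z n = ∑ k ∈ S n, b.coord k (z n) • b.e k := fun n => b.finite_expansion (hfin n)
  have f0 : ∀ n, (S n).Nonempty := by
    intro n
    rcases (S n).eq_empty_or_nonempty with h | h
    · exfalso
      have hz0 : z n = 0 := by rw [f1 n, h, Finset.sum_empty]
      have h1 := hnorm n
      rw [hz0, norm_zero] at h1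
      norm_num at h1
    · exact h
  have hordS : ∀ n, ∀ k ∈ S n, ∀ l ∈ S (n+1), k < l := by
    intro n k hk l hl
    exact hord n k ((mem_S k n).mp hk) l ((mem_S l (n+1)).mp hl)
  have ford : ∀ m n, m < n → ∀ k ∈ S m, ∀ l ∈ S n, k < l := by
    intro m n
    induction n with
    | zero => exact fun h => absurd h (Nat.not_lt_zero m)
    | succ n ih =>
      intro h k hk l hl
      rcases Nat.lt_succ_iff_lt_or_eq.mp h with h' | rfl
      · obtain ⟨j, hj⟩ := f0 n
        exact (ih h' k hk j hj).trans (hordS n j hj l hl)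
      · exact hordS m k hk l hl
  set Mx : ℕ → ℕ := fun n => (S n).max' (f0 n) with hMxdef
  set B : ℕ → ℕ := fun n => Nat.casesOn n 0 (fun m => Mx m + 1) with hBdef
  have hB0 : B 0 = 0 := rfl
  have hBs : ∀ n, B (n+1) = Mx n + 1 := fun n => rfl
  have fB : StrictMono B := by
    apply strictMono_nat_of_lt_succ
    intro n
    cases n with
    | zero => rw [hB0, hBs]; exact Nat.succ_pos _
    | succ m =>
      rw [hBs, hBs]
      have : Mx m < Mx (m+1) := ford m (m+1) (Nat.lt_succ_self m)
        _ ((S m).max'_mem (f0 m)) _ ((S (m+1)).max'_mem (f0 (m+1)))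
      omega
  have fmem : ∀ n, ∀ k ∈ S n, B n ≤ k ∧ k < B (n+1) := by
    intro n k hk
    constructor
    · cases n with
      | zero => exact Nat.zero_le k
      | succ m =>
        rw [hBs]
        have : Mx m < k := ford m (m+1) (Nat.lt_succ_self m) _ ((S m).max'_mem (f0 m)) _ hk
        omega
    · rw [hBs]
      have : k ≤ Mx n := (S n).le_max' k hk
      omega
  have funiq : ∀ k n m, k ∈ S n → k ∈ S m → n = m := by
    intro k n m hn hm
    rcases lt_trichotomy n m with h | h | h
    · exact absurd (ford n m h k hn k hm) (lt_irrefl k)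
    · exact h
    · exact absurd (ford m n h k hm k hn) (lt_irrefl k)
  have fc : ∀ (c : ℕ → ℝ) (n : ℕ), ∀ k ∈ S n, b.coef z c k = c n * b.coord k (z n) := by
    intro c n k hk
    have hex : ∃ m, b.coord k (z m) ≠ 0 := ⟨n, (mem_S k n).mp hk⟩
    rw [coef, dif_pos hex]
    have : hex.choose = n := funiq k hex.choose n ((mem_S k _).mpr hex.choose_spec) hk
    rw [this]
  have fc0 : ∀ (c : ℕ → ℝ) (k : ℕ), (∀ n, k ∉ S n) → b.coef z c k = 0 := by
    intro c k hk
    rw [coef, dif_neg]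
    push_neg
    intro n
    by_contra h
    exact hk n ((mem_S k n).mpr h)
  -- unique block containing k in a window
  have fwin : ∀ N k, B N ≤ k → k < B (N+1) → ∀ n, k ∈ S n → n = N := by
    intro N k h1 h2 n hn
    obtain ⟨h3, h4⟩ := fmem n k hn
    by_contra hne
    rcases lt_or_gt_of_ne hne with h | h
    · have : B (n+1) ≤ B N := fB.le_iff_le.mpr h
      omega
    · have : B (N+1) ≤ B n := fB.le_iff_le.mpr h
      omega
  have f6a : ∀ N, ∑ k ∈ Finset.range (B N), b.coef z a k • b.e k
      = ∑ n ∈ Finset.range N, a n • z n := by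
    intro N
    induction N with
    | zero => simp [hB0]
    | succ N ih =>
      rw [← Finset.sum_range_add_sum_Ico (fun k => b.coef z a k • b.e k) (fB.le_iff_le.mpr (Nat.le_succ N)), ih,
        Finset.sum_range_succ]
      congr 1
      have hterm : ∀ k ∈ Finset.Ico (B N) (B (N+1)),
          b.coef z a k • b.e k = a N • (b.coord k (z N) • b.e k) := by
        intro k hk
        rw [Finset.mem_Ico] at hk
        by_cases hmem : k ∈ S N
        · rw [fc a N k hmem, mul_smul]
        · have h1 : b.coef z a k = 0 := by
            apply fc0
            intro n hn
            exact hmem ((fwin N k hk.1 hk.2 n hn) ▸ hn)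
          have h2 : b.coord k (z N) = 0 := by
            by_contra h
            exact hmem ((mem_S k N).mpr h)
          rw [h1, h2]; simp
      rw [Finset.sum_congr rfl hterm, ← Finset.smul_sum]
      congr 1
      conv_rhs => rw [f1 N]
      refine (Finset.sum_subset ?_ ?_).symm
      · intro k hk
        rw [Finset.mem_Ico]
        exact fmem N k hk
      · intro k _ hk
        have : b.coord k (z N) = 0 := by
          by_contra h
          exact hk ((mem_S k N).mpr h)
        simp [this]
  have f6b : ∀ N M, B N ≤ M → M ≤ B (N+1) →
      ∑ k ∈ Finset.range M, b.coef z a k • b.e k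
        = (∑ n ∈ Finset.range N, a n • z n)
          + a N • ∑ k ∈ Finset.range M, b.coord k (z N) • b.e k := by
    intro N M h1 h2
    rw [← Finset.sum_range_add_sum_Ico (fun k => b.coef z a k • b.e k) h1, f6a N]
    congr 1
    have hterm : ∀ k ∈ Finset.Ico (B N) M,
        b.coef z a k • b.e k = a N • (b.coord k (z N) • b.e k) := by
      intro k hk
      rw [Finset.mem_Ico] at hk
      have hk2 : k < B (N+1) := lt_of_lt_of_le hk.2 h2
      by_cases hmem : k ∈ S N
      · rw [fc a N k hmem, mul_smul]
      · have hc1 : b.coef z a k = 0 := by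
          apply fc0
          intro n hn
          exact hmem ((fwin N k hk.1 hk2 n hn) ▸ hn)
        have hc2 : b.coord k (z N) = 0 := by
          by_contra h
          exact hmem ((mem_S k N).mpr h)
        rw [hc1, hc2]; simp
    rw [Finset.sum_congr rfl hterm, ← Finset.smul_sum]
    congr 1
    refine Finset.sum_subset ?_ ?_
    · intro k hk
      rw [Finset.mem_Ico] at hk
      exact Finset.mem_range.mpr (hk.2)
    · intro k hk hk'
      rw [Finset.mem_range] at hk
      rw [Finset.mem_Ico] at hk'
      push_neg at hk'
      have hkB : k < B N := by
        by_contra h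
        push_neg at h
        have := hk' h
        omega
      have : b.coord k (z N) = 0 := by
        by_contra h
        have := (fmem N k ((mem_S k N).mpr h)).1
        omega
      simp [this]
  constructor
  · rintro ⟨s, hs⟩
    obtain ⟨K, hK⟩ := b.proj_bound
    set Nof : ℕ → ℕ := fun M => Nat.findGreatest (fun n => B n ≤ M) M with hNofdef
    have hBn : ∀ n, n ≤ B n := fun n => fB.le_apply
    have hNle : ∀ M, B (Nof M) ≤ M := by
      intro M
      exact Nat.findGreatest_spec (P := fun n => B n ≤ M) (Nat.zero_le M)
        (show B 0 ≤ M by rw [hB0]; exact Nat.zero_le M)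
    have hNlt : ∀ M, M < B (Nof M + 1) := by
      intro M
      by_contra hcon
      push_neg at hcon
      have h1 : Nof M + 1 ≤ M := le_trans (hBn _) hcon
      have h2 := Nat.le_findGreatest (P := fun n => B n ≤ M) h1 hcon
      have h3 : Nat.findGreatest (fun n => B n ≤ M) M = Nof M := rfl
      rw [h3] at h2
      omega
    have hNtop : Tendsto Nof atTop atTop := by
      apply tendsto_atTop_atTop.mpr
      intro n
      refine ⟨B n, fun M hM => ?_⟩
      exact Nat.le_findGreatest (P := fun k => B k ≤ M) (le_trans (hBn n) hM) hM
    have hzero : Tendsto (fun N => |a N|) atTop (𝓝 0) := by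
      have h1 : Tendsto (fun N => a N • z N) atTop (𝓝 0) := by
        have h2 := (hs.comp (tendsto_add_atTop_nat 1)).sub hs
        rw [sub_self] at h2
        refine h2.congr ?_
        intro N
        simp [Finset.sum_range_succ]
      have h3 := h1.norm
      rw [norm_zero] at h3
      refine (h3.congr ?_ : Tendsto (fun N => |a N|) atTop (𝓝 0))
      intro N
      rw [norm_smul, hnorm N, mul_one, Real.norm_eq_abs]
    refine ⟨s, ?_⟩
    have key : ∀ M, ∑ k ∈ Finset.range M, b.coef z a k • b.e k
        = (∑ n ∈ Finset.range (Nof M), a n • z n)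
          + a (Nof M) • ∑ k ∈ Finset.range M, b.coord k (z (Nof M)) • b.e k :=
      fun M => f6b (Nof M) M (hNle M) (le_of_lt (hNlt M))
    have t1 : Tendsto (fun M => ∑ n ∈ Finset.range (Nof M), a n • z n) atTop (𝓝 s) :=
      hs.comp hNtop
    have t2 : Tendsto
        (fun M => a (Nof M) • ∑ k ∈ Finset.range M, b.coord k (z (Nof M)) • b.e k)
        atTop (𝓝 (0 : X)) := by
      apply squeeze_zero_norm (a := fun M => |a (Nof M)| * (K * 1))
      · intro M
        rw [norm_smul, Real.norm_eq_abs]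
        have := hK (z (Nof M)) M
        rw [hnorm (Nof M)] at this
        exact mul_le_mul_of_nonneg_left this (abs_nonneg _)
      · have := (hzero.comp hNtop).mul_const (K * 1)
        rw [zero_mul] at this
        exact this
    have := t1.add t2
    rw [add_zero] at this
    exact this.congr (fun M => (key M).symm)
  · rintro ⟨s, hs⟩
    refine ⟨s, ?_⟩
    have h1 : Tendsto (fun N => ∑ k ∈ Finset.range (B N), b.coef z a k • b.e k) atTop (𝓝 s) :=
      hs.comp fB.tendsto_atTop
    exact h1.congr f6a

end SchauderBasisR
namespace SchauderBasisR

variable {X : Type*} [NormedAddCommGroup X] [NormedSpace ℝ X] (b : SchauderBasisR X)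

lemma signs_e (hu : b.Unconditional) {θ : ℕ → ℝ} (hθ : IsSigns θ) (c : ℕ → ℝ) :
    Converges (fun k => c k • b.e k) ↔ Converges (fun k => (θ k * c k) • b.e k) := by
  have h1 := hu θ hθ (fun k => θ k * c k)
  have hsq : ∀ k, (θ k * c k) • θ k • b.e k = c k • b.e k := by
    intro k
    rw [smul_smul]
    congr 1
    rcases hθ k with h | h <;> rw [h] <;> ring
  exact (converges_congr hsq).symm.trans h1

open Classical in
lemma block_signs [CompleteSpace X] (hu : b.Unconditional) {z : ℕ → X} (hz : b.IsBlockSeq z)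
    {θ : ℕ → ℝ} (hθ : IsSigns θ) (a : ℕ → ℝ) :
    Converges (fun n => a n • z n) ↔ Converges (fun n => (θ n * a n) • z n) := by
  set Θ : ℕ → ℝ := fun k => if h : ∃ n, b.coord k (z n) ≠ 0 then θ h.choose else 1 with hΘdef
  have hΘ : IsSigns Θ := by
    intro k
    by_cases h : ∃ n, b.coord k (z n) ≠ 0
    · simp only [hΘdef, dif_pos h]
      exact hθ _
    · simp only [hΘdef, dif_neg h]
      exact Or.inl trivial
  have hcoef : ∀ k, b.coef z (fun n => θ n * a n) k = Θ k * b.coef z a k := by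
    intro k
    by_cases h : ∃ n, b.coord k (z n) ≠ 0
    · simp only [coef, hΘdef, dif_pos h]
      ring
    · simp only [coef, hΘdef, dif_neg h]
      ring
  calc Converges (fun n => a n • z n)
      ↔ Converges (fun k => b.coef z a k • b.e k) := b.blockEquiv hz a
    _ ↔ Converges (fun k => (Θ k * b.coef z a k) • b.e k) := b.signs_e hu hΘ _
    _ ↔ Converges (fun k => b.coef z (fun n => θ n * a n) k • b.e k) :=
        converges_congr (fun k => by rw [hcoef k])
    _ ↔ Converges (fun n => (θ n * a n) • z n) := (b.blockEquiv hz _).symm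

lemma block_split [CompleteSpace X] (hu : b.Unconditional) {z : ℕ → X} (hz : b.IsBlockSeq z)
    (a : ℕ → ℝ) :
    Converges (fun n => a n • z n) ↔
      (Converges (fun n => (if Even n then a n else 0) • z n) ∧
       Converges (fun n => (if Even n then 0 else a n) • z n)) := by
  set θ : ℕ → ℝ := fun n => if Even n then 1 else -1 with hθdef
  have hθ : IsSigns θ := by
    intro n
    by_cases h : Even n
    · simp only [hθdef, if_pos h]
      exact Or.inl trivial
    · simp only [hθdef, if_neg h]
      exact Or.inr trivial
  constructor
  · intro h
    have h2 := (b.block_signs hu hz hθ a).mp h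
    have hE : Converges (fun n => (if Even n then a n else 0) • z n) := by
      refine (converges_congr (g := fun n => (if Even n then a n else 0) • z n) ?_).mp
        ((h.add' h2).smul' (2⁻¹ : ℝ))
      intro n
      rw [← add_smul, smul_smul]
      congr 1
      by_cases hn : Even n
      · simp only [hθdef, if_pos hn]; ring
      · simp only [hθdef, if_neg hn]; ring
    refine ⟨hE, ?_⟩
    refine (converges_congr (g := fun n => (if Even n then 0 else a n) • z n) ?_).mp
      (h.add' (hE.smul' (-1 : ℝ)))
    intro n
    by_cases hn : Even n
    · simp [hn]
    · simp [hn]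
  · rintro ⟨h1, h2⟩
    refine (converges_congr ?_).mp (h1.add' h2)
    intro n
    rw [← add_smul]
    congr 1
    by_cases hn : Even n <;> simp [hn]

end SchauderBasisR
theorem shift_property_imp_jointly_successive_equivalent
    {X : Type*} [NormedAddCommGroup X] [NormedSpace ℝ X] [CompleteSpace X]
    (b : SchauderBasisR X) (hu : b.Unconditional)
    (hshift : b.ShiftProperty) :
    ∀ x y : ℕ → X, b.IsBlockSeq x → b.IsBlockSeq y →
      (∀ i, ∀ k ∈ b.supp (x i) ∪ b.supp (y i),
            ∀ l ∈ b.supp (x (i+1)) ∪ b.supp (y (i+1)), k < l) →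
      SeqEquiv x y := by
  intro x y hx hy hj
  set u : ℕ → X := fun n => if Even n then x n else y n with hudef
  set w : ℕ → X := fun n => if Even n then y n else x n with hwdef
  have hublk : b.IsBlockSeq u := by
    refine ⟨?_, ?_, ?_⟩
    · intro n
      by_cases hn : Even n
      · simp only [hudef, if_pos hn]; exact hx.1 n
      · simp only [hudef, if_neg hn]; exact hy.1 n
    · intro n
      by_cases hn : Even n
      · simp only [hudef, if_pos hn]; exact hx.2.1 n
      · simp only [hudef, if_neg hn]; exact hy.2.1 n
    · intro n i hi j hj'
      refine hj n i ?_ j ?_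
      · by_cases hn : Even n
        · simp only [hudef, if_pos hn] at hi; exact Set.mem_union_left _ hi
        · simp only [hudef, if_neg hn] at hi; exact Set.mem_union_right _ hi
      · by_cases hn : Even (n+1)
        · simp only [hudef, if_pos hn] at hj'; exact Set.mem_union_left _ hj'
        · simp only [hudef, if_neg hn] at hj'; exact Set.mem_union_right _ hj'
  have hwblk : b.IsBlockSeq w := by
    refine ⟨?_, ?_, ?_⟩
    · intro n
      by_cases hn : Even n
      · simp only [hwdef, if_pos hn]; exact hy.1 n
      · simp only [hwdef, if_neg hn]; exact hx.1 n
    · intro n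
      by_cases hn : Even n
      · simp only [hwdef, if_pos hn]; exact hy.2.1 n
      · simp only [hwdef, if_neg hn]; exact hx.2.1 n
    · intro n i hi j hj'
      refine hj n i ?_ j ?_
      · by_cases hn : Even n
        · simp only [hwdef, if_pos hn] at hi; exact Set.mem_union_right _ hi
        · simp only [hwdef, if_neg hn] at hi; exact Set.mem_union_left _ hi
      · by_cases hn : Even (n+1)
        · simp only [hwdef, if_pos hn] at hj'; exact Set.mem_union_right _ hj'
        · simp only [hwdef, if_neg hn] at hj'; exact Set.mem_union_left _ hj'
  intro a
  set aE : ℕ → ℝ := fun n => if Even n then a n else 0 with haE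
  set aO : ℕ → ℝ := fun n => if Even n then 0 else a n with haO
  have cE : Converges (fun n => aE n • x n) ↔ Converges (fun n => aE n • y n) := by
    calc Converges (fun n => aE n • x n)
        ↔ Converges (fun n => aE n • u n) := by
          refine converges_congr fun n => ?_
          by_cases hn : Even n
          · simp only [hudef, if_pos hn]
          · simp only [haE, hudef, if_neg hn, zero_smul]
      _ ↔ Converges (fun n => aE n • u (n+1)) := hshift u hublk aE
      _ ↔ Converges (fun n => aE n • y (n+1)) := by
          refine converges_congr fun n => ?_
          by_cases hn : Even n
          · have hn1 : ¬ Even (n+1) := by simp [Nat.even_add_one, hn]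
            simp only [hudef, if_neg hn1]
          · simp only [haE, if_neg hn, zero_smul]
      _ ↔ Converges (fun n => aE n • y n) := (hshift y hy aE).symm
  have cO : Converges (fun n => aO n • x n) ↔ Converges (fun n => aO n • y n) := by
    calc Converges (fun n => aO n • x n)
        ↔ Converges (fun n => aO n • w n) := by
          refine converges_congr fun n => ?_
          by_cases hn : Even n
          · simp only [haO, if_pos hn, zero_smul]
          · simp only [hwdef, if_neg hn]
      _ ↔ Converges (fun n => aO n • w (n+1)) := hshift w hwblk aO
      _ ↔ Converges (fun n => aO n • y (n+1)) := by
          refine converges_congr fun n => ?_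
          by_cases hn : Even n
          · simp only [haO, if_pos hn, zero_smul]
          · have hn1 : Even (n+1) := by simp [Nat.even_add_one, hn]
            simp only [hwdef, if_pos hn1]
      _ ↔ Converges (fun n => aO n • y n) := (hshift y hy aO).symm
  rw [b.block_split hu hx a, b.block_split hu hy a]
  exact and_congr cE cO
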